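/- Let a : ℕ → ℝ, let k ≥ 1 be a natural number, and let A be a real number. If the (C, k−1) Cesàro means γ^{(k−1)}_m := Σ_{n=1}^m (C(m+k−1−n, k−1)/C(m+k−1, k−1)) · a_n converge to A as m → ∞, then the (C, k) Cesàro means γ^{(k)}_m := Σ_{n=1}^m (C(m+k−n, k)/C(m+k, k)) · a_n also converge to A as m → ∞ (consistency of Cesàro summation: passing from the Cesàro method of order k−1 to the Cesàro method of order k preserves the generalized sum). -/

import Mathlib

open Filter

section CesaroAux
open Finset Asymptotics

private lemma cesaro_key_nat (K m n : ℕ) (hn : n ≤ m) :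
    ∑ j ∈ Finset.Icc n m, (j + K - n).choose K = (m + K + 1 - n).choose (K + 1) := by
  rw [← Finset.Ico_add_one_right_eq_Icc, Finset.sum_Ico_eq_sum_range]
  have h1 : ∀ i, (n + i + K - n).choose K = (i + K).choose K := by
    intro i; congr 1; omega
  rw [Finset.sum_congr rfl fun i _ => h1 i]
  have h2 : ∑ i ∈ range (m + 1 - n), (i + K).choose K
      = ∑ i ∈ Finset.Icc K (m - n + K), i.choose K := by
    rw [← Finset.Ico_add_one_right_eq_Icc, Finset.sum_Ico_eq_sum_range]
    apply Finset.sum_congr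
    · congr 1; omega
    · intro i _; congr 1; omega
  rw [h2, Nat.sum_Icc_choose]
  congr 1; omega

private lemma cesaro_aux (a : ℕ → ℝ) (K : ℕ) (A : ℝ)
    (h : Tendsto
      (fun m : ℕ => ∑ n ∈ Finset.Icc 1 m,
          (((m + K - n).choose K : ℝ) / ((m + K).choose K : ℝ)) * a n)
      atTop (nhds A)) :
    Tendsto
      (fun m : ℕ => ∑ n ∈ Finset.Icc 1 m,
          (((m + K + 1 - n).choose (K + 1) : ℝ) / ((m + K + 1).choose (K + 1) : ℝ)) * a n)
      atTop (nhds A) := by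
  set γ : ℕ → ℝ := fun j => ∑ n ∈ Finset.Icc 1 j,
      (((j + K - n).choose K : ℝ) / ((j + K).choose K : ℝ)) * a n with hγ
  set c : ℕ → ℝ := fun j => ((j + K).choose K : ℝ) with hc
  set D : ℕ → ℝ := fun m => ((m + K + 1).choose (K + 1) : ℝ) with hD
  have hc_pos : ∀ j, 0 < c j := fun j =>
    Nat.cast_pos.2 (Nat.choose_pos (Nat.le_add_left K j))
  have hD_pos : ∀ m, 0 < D m := fun m =>
    Nat.cast_pos.2 (Nat.choose_pos (Nat.le_add_left (K + 1) m))
  -- c j * γ j is the unnormalized mean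
  have hT : ∀ j, c j * γ j = ∑ n ∈ Finset.Icc 1 j, ((j + K - n).choose K : ℝ) * a n := by
    intro j
    rw [hγ, Finset.mul_sum]
    refine Finset.sum_congr rfl fun n _ => ?_
    rw [div_mul_eq_mul_div, mul_div_assoc']
    exact mul_div_cancel_left₀ _ (hc_pos j).ne'
  -- key identity
  have key : ∀ m, ∑ j ∈ Finset.Icc 1 m, c j * γ j
      = ∑ n ∈ Finset.Icc 1 m, ((m + K + 1 - n).choose (K + 1) : ℝ) * a n := by
    intro m
    simp only [hT]
    have swap := Finset.sum_Ico_Ico_comm 1 (m + 1)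
      (fun n j => ((j + K - n).choose K : ℝ) * a n)
    simp only [Finset.Ico_add_one_right_eq_Icc] at swap
    rw [← swap]
    refine Finset.sum_congr rfl fun n hn => ?_
    rw [← Finset.sum_mul, ← Nat.cast_sum,
      cesaro_key_nat K m n (Finset.mem_Icc.1 hn).2]
  -- sum of weights
  have wsum : ∀ m, ∑ j ∈ Finset.Icc 1 m, c j = D m - 1 := by
    intro m
    have hr : ∑ j ∈ Finset.Icc 0 m, ((j + K - 0).choose K : ℝ)
        = ((m + K + 1 - 0).choose (K + 1) : ℝ) := by
      rw [← Nat.cast_sum, cesaro_key_nat K m 0 (Nat.zero_le m)]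
    simp only [Nat.sub_zero] at hr
    have hsplit : ∑ j ∈ Finset.Icc 0 m, ((j + K).choose K : ℝ)
        = ((0 + K).choose K : ℝ) + ∑ j ∈ Finset.Icc 1 m, ((j + K).choose K : ℝ) := by
      rw [← Finset.Ico_add_one_right_eq_Icc 0 m, Finset.sum_eq_sum_Ico_succ_bot (b := m + 1) (Nat.succ_pos m),
        Finset.Ico_add_one_right_eq_Icc]
    rw [hsplit] at hr
    simp only [Nat.zero_add, Nat.choose_self, Nat.cast_one] at hr
    rw [hc, hD]
    linarith [hr]
  -- f =o c setup
  set f : ℕ → ℝ := fun j => c j * (γ j - A) with hf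
  have hfo : f =o[atTop] c := by
    have h0 : Tendsto (fun j => γ j - A) atTop (nhds 0) := by
      simpa using h.sub_const A
    have h1 := ((isLittleO_one_iff ℝ).2 h0).mul_isBigO (isBigO_refl c atTop)
    refine h1.congr (fun j => ?_) (fun j => one_mul _)
    rw [hf]; ring
  have hc_nonneg : 0 ≤ c := fun j => (hc_pos j).le
  have hc_sum : Tendsto (fun n => ∑ i ∈ range n, c i) atTop atTop := by
    apply tendsto_atTop_mono (fun n => ?_) tendsto_natCast_atTop_atTop
    calc (n : ℝ) = ∑ _i ∈ range n, (1 : ℝ) := by simp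
    _ ≤ ∑ i ∈ range n, c i := by
        apply Finset.sum_le_sum
        intro i _
        have h1 : (1 : ℕ) ≤ (i + K).choose K := Nat.choose_pos (Nat.le_add_left K i)
        show (1 : ℝ) ≤ ((i + K).choose K : ℝ)
        exact_mod_cast h1
  have hsum_o := hfo.sum_range hc_nonneg hc_sum
  -- evaluate the range sums at m+1
  have hfs : ∀ m, ∑ i ∈ range (m + 1), f i = (∑ j ∈ Finset.Icc 1 m, c j * γ j) - A * D m := by
    intro m
    have hsplit : ∑ i ∈ range (m + 1), f i = f 0 + ∑ j ∈ Finset.Icc 1 m, f j := by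
      rw [Finset.range_eq_Ico, Finset.sum_eq_sum_Ico_succ_bot (b := m + 1) (Nat.succ_pos m),
        Finset.Ico_add_one_right_eq_Icc]
    have hγ0 : γ 0 = 0 := by simp [hγ]
    have hc0 : c 0 = 1 := by simp [hc]
    have hf0 : f 0 = -A := by
      show c 0 * (γ 0 - A) = -A
      rw [hγ0, hc0]; ring
    rw [hsplit, hf0]
    have h1 : ∑ j ∈ Finset.Icc 1 m, f j
        = (∑ j ∈ Finset.Icc 1 m, c j * γ j) - A * (∑ j ∈ Finset.Icc 1 m, c j) := by
      rw [Finset.mul_sum, ← Finset.sum_sub_distrib]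
      refine Finset.sum_congr rfl fun j _ => ?_
      show c j * (γ j - A) = _
      ring
    rw [h1, wsum]
    ring
  have hgs : ∀ m, ∑ i ∈ range (m + 1), c i = D m := by
    intro m
    have hsplit : ∑ i ∈ range (m + 1), c i = c 0 + ∑ j ∈ Finset.Icc 1 m, c j := by
      rw [Finset.range_eq_Ico, Finset.sum_eq_sum_Ico_succ_bot (b := m + 1) (Nat.succ_pos m),
        Finset.Ico_add_one_right_eq_Icc]
    have hc0 : c 0 = 1 := by simp [hc]
    rw [hsplit, hc0, wsum]
    ring
  have hcomp := hsum_o.comp_tendsto (tendsto_add_atTop_nat 1)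
  have hdiv : Tendsto (fun m => ((∑ j ∈ Finset.Icc 1 m, c j * γ j) - A * D m) / D m)
      atTop (nhds 0) := by
    have h2 := hcomp.tendsto_div_nhds_zero
    refine h2.congr fun m => ?_
    simp only [Function.comp_apply]
    rw [hfs m, hgs m]
  have hfinal : Tendsto (fun m => (∑ j ∈ Finset.Icc 1 m, c j * γ j) / D m)
      atTop (nhds A) := by
    have h3 := hdiv.add_const A
    rw [zero_add] at h3
    refine h3.congr fun m => ?_
    rw [div_add' _ _ _ (hD_pos m).ne', sub_add_cancel]
  refine hfinal.congr fun m => ?_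
  rw [key m, Finset.sum_div]
  exact Finset.sum_congr rfl fun n _ => (div_mul_eq_mul_div _ _ _).symm

end CesaroAux

/-- consistency of Cesàro summation.  For a real sequence `a`, `k ≥ 1`
and a real number `A`: if the `(C, k−1)` means
`γ^{(k−1)}_m = Σ_{n=1}^m (C(m+k−1−n, k−1)/C(m+k−1, k−1)) a_n` converge to `A` as
`m → ∞`, then the `(C, k)` means
`γ^{(k)}_m = Σ_{n=1}^m (C(m+k−n, k)/C(m+k, k)) a_n` also converge to `A`. -/
theorem cesaro_consistency (a : ℕ → ℝ) (k : ℕ) (hk : 1 ≤ k) (A : ℝ)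
    (h : Tendsto
      (fun m : ℕ =>
        ∑ n ∈ Finset.Icc 1 m,
          (((m + k - 1 - n).choose (k - 1) : ℝ) / ((m + k - 1).choose (k - 1) : ℝ)) * a n)
      atTop (nhds A)) :
    Tendsto
      (fun m : ℕ =>
        ∑ n ∈ Finset.Icc 1 m,
          (((m + k - n).choose k : ℝ) / ((m + k).choose k : ℝ)) * a n)
      atTop (nhds A) := by
  obtain ⟨K, rfl⟩ : ∃ K, k = K + 1 := ⟨k - 1, (Nat.succ_pred_eq_of_pos hk).symm⟩
  exact cesaro_aux a K A h
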